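/- If x, y, z are positive integers with x > y ≥ 1, n ≥ 3 an integer, and y < 1/(2^{1/n} − 1), then xⁿ + yⁿ ≠ zⁿ. -/

import Mathlib

/-- The map `t ↦ (t+1)^n - t^n` is monotone, stated subtraction-free. -/
lemma stmt_9_mono (n a k : ℕ) : (a+1)^n + (a+k)^n ≤ (a+k+1)^n + a^n := by
  induction n with
  | zero => simp
  | succ n ih =>
    have h1 : a^n ≤ (a+1)^n := Nat.pow_le_pow_left (by omega) n
    have h2 : a^n ≤ (a+k)^n := Nat.pow_le_pow_left (by omega) n
    have hih := Nat.mul_le_mul_right (a+k+1) ih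
    simp only [pow_succ]
    nlinarith [Nat.mul_le_mul_right k h1, h2, hih]

/-- Partial Fermat result: no solutions when y < 1/(2^(1/n) − 1). -/
theorem stmt_9 (x y z n : ℕ) (hy : 1 ≤ y) (hxy : y < x) (hz : 0 < z) (hn : 3 ≤ n)
    (hbound : (y : ℝ) < 1 / ((2 : ℝ) ^ ((1 : ℝ) / n) - 1)) :
    x ^ n + y ^ n ≠ z ^ n := by
  intro heq
  have hn0 : 0 < n := by omega
  -- 2^(1/n) > 1
  have hr : (1:ℝ) < (2 : ℝ) ^ ((1 : ℝ) / n) := by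
    exact Real.one_lt_rpow_iff_of_pos (by norm_num) |>.mpr (Or.inl ⟨by norm_num, by positivity⟩)
  have hden : (0:ℝ) < (2 : ℝ) ^ ((1 : ℝ) / n) - 1 := by linarith
  -- y * 2^(1/n) < y + 1
  have hy2 : (y:ℝ) * (2 : ℝ) ^ ((1 : ℝ) / n) < y + 1 := by
    have := (lt_div_iff₀ hden).mp hbound
    nlinarith
  -- 2 * y^n < (y+1)^n  (in ℝ then ℕ)
  have hyr : (2:ℝ) * (y:ℝ)^n < ((y:ℝ)+1)^n := by
    have hpos : (0:ℝ) ≤ (y:ℝ) * (2 : ℝ) ^ ((1 : ℝ) / n) := by positivity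
    have := pow_lt_pow_left₀ hy2 hpos hn0.ne'
    have h2 : (((2:ℝ) ^ ((1:ℝ)/n))^n) = 2 := by
      rw [← Real.rpow_natCast ((2:ℝ) ^ ((1:ℝ)/n)) n, ← Real.rpow_mul (by norm_num)]
      field_simp
      simp
    calc (2:ℝ) * (y:ℝ)^n = ((y:ℝ) * (2:ℝ)^((1:ℝ)/n))^n := by
          rw [mul_pow, h2]; ring
      _ < ((y:ℝ)+1)^n := this
  have hyn : 2 * y^n < (y+1)^n := by
    have : ((2 * y^n : ℕ) : ℝ) < (((y+1)^n : ℕ) : ℝ) := by push_cast; linarith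
    exact_mod_cast this
  -- z > x, so z ≥ x + 1
  have hzx : x < z := by
    have hxn : x^n < z^n := by
      have := Nat.one_le_pow n y hy
      omega
    exact lt_of_pow_lt_pow_left₀ n (Nat.zero_le z) hxn
  have hxz : (x+1)^n ≤ z^n := Nat.pow_le_pow_left (by omega) n
  -- monotonicity with a = y, k = x - y
  have hm := stmt_9_mono n y (x - y)
  have hk : y + (x - y) = x := by omega
  rw [hk] at hm
  omega
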